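/- Total conditioning characterization restricted to the independence direction: if y is not in the Markov blanket of x in a DAG G whose distribution P is Markov and faithful to G, then x ⊥ y | X∖{x,y}, where X is the full vertex set. -/

import Mathlib

/-- `G` is acyclic: no directed cycle (its transitive closure is irreflexive). -/
def Acyclic {V : Type} (G : V → V → Prop) : Prop :=
  ∀ v, ¬ Relation.TransGen G v v

/-- The Markov blanket of `x`: parents, children, and spouses of `x`. -/
def MarkovBlanket {V : Type} (G : V → V → Prop) (x : V) : Set V :=
  {y | G y x ∨ G x y ∨ (y ≠ x ∧ ∃ c, G x c ∧ G y c)}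

/-- `b` is a collider between `a` and `c`: edges `a → b` and `c → b`. -/
def Collider {V : Type} (G : V → V → Prop) (a b c : V) : Prop := G a b ∧ G c b

/-- A trail `w` is active given `Z`: consecutive vertices are joined by an edge
in some direction, every collider on the trail is in `Z`, and no other internal
vertex is in `Z`. -/
def ActiveTrail {V : Type} (G : V → V → Prop) (Z : Set V) (k : ℕ)
    (w : Fin (k + 1) → V) : Prop :=
  Function.Injective w ∧
    (∀ i : Fin k, G (w i.castSucc) (w i.succ) ∨ G (w i.succ) (w i.castSucc)) ∧
    (∀ i j : Fin k, (j : ℕ) = (i : ℕ) + 1 →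
      (Collider G (w i.castSucc) (w i.succ) (w j.succ) → w i.succ ∈ Z) ∧
      (¬ Collider G (w i.castSucc) (w i.succ) (w j.succ) → w i.succ ∉ Z))

/-- `x` and `y` are d-separated given `Z`: there is no active trail from `x`
to `y` given `Z`. -/
def DSep {V : Type} (G : V → V → Prop) (x y : V) (Z : Set V) : Prop :=
  ¬ ∃ (k : ℕ) (w : Fin (k + 1) → V),
      w 0 = x ∧ w (Fin.last k) = y ∧ ActiveTrail G Z k w

/-- In a finite DAG, if `y` is not in the Markov blanket of `x`,
then `x` and `y` are d-separated given all the remaining vertices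
(hence, for a distribution Markov and faithful to `G`, `x ⟂ y | X∖{x,y}`). -/
theorem stmt16 {V : Type} [Fintype V] (G : V → V → Prop) (hG : Acyclic G)
    (x y : V) (hxy : x ≠ y) (hyMB : y ∉ MarkovBlanket G x) :
    DSep G x y (Set.univ \ {x, y}) := by
  rintro ⟨k, w, h0, hlast, hinj, hadj, hcol⟩
  -- every internal vertex is in Z
  have hmem : ∀ m : Fin (k + 1), m ≠ 0 → m ≠ Fin.last k →
      w m ∈ (Set.univ \ {x, y} : Set V) := by
    intro m hm0 hml
    refine ⟨trivial, ?_⟩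
    simp only [Set.mem_insert_iff, Set.mem_singleton_iff, not_or]
    constructor
    · intro h; exact hm0 (hinj (h.trans h0.symm))
    · intro h; exact hml (hinj (h.trans hlast.symm))
  rcases k with _ | _ | _ | k
  · -- k = 0 : x = y
    exact hxy (h0.symm.trans hlast)
  · -- k = 1 : edge between x and y
    have := hadj ⟨0, by omega⟩
    have e0 : w (Fin.castSucc ⟨0, by omega⟩) = x := h0
    have e1 : w (Fin.succ ⟨0, by omega⟩) = y := hlast
    rw [e0, e1] at this
    exact hyMB (this.elim (fun h => Or.inr (Or.inl h)) (fun h => Or.inl h))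
  · -- k = 2 : w 1 must be a collider, so y is a spouse of x
    obtain ⟨hc1, hc2⟩ := hcol ⟨0, by omega⟩ ⟨1, by omega⟩ rfl
    have hmid : w (Fin.succ ⟨0, by omega⟩) ∈ (Set.univ \ {x, y} : Set V) := by
      apply hmem
      · intro h; simpa [Fin.ext_iff] using h
      · intro h; simpa [Fin.ext_iff, Fin.last] using h
    by_cases hc : Collider G (w (Fin.castSucc ⟨0, by omega⟩))
        (w (Fin.succ ⟨0, by omega⟩)) (w (Fin.succ ⟨1, by omega⟩))
    · obtain ⟨ha, hb⟩ := hc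
      have ha' : G x (w (Fin.succ (⟨0, by omega⟩ : Fin 2))) := by
        rwa [show Fin.castSucc (⟨0, by omega⟩ : Fin 2) = 0 from rfl, h0] at ha
      have hb' : G y (w (Fin.succ (⟨0, by omega⟩ : Fin 2))) := by
        rwa [show Fin.succ (⟨1, by omega⟩ : Fin 2) = Fin.last 2 from rfl,
          hlast] at hb
      exact hyMB (Or.inr (Or.inr ⟨hxy.symm, _, ha', hb'⟩))
    · exact hc2 hc hmid
  · -- k ≥ 3 : two consecutive colliders give a 2-cycle
    have hmid1 : w (Fin.succ (⟨0, by omega⟩ : Fin (k+3))) ∈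
        (Set.univ \ {x, y} : Set V) := by
      apply hmem
      · intro h; simpa [Fin.ext_iff] using h
      · intro h
        have := Fin.ext_iff.mp h
        simp [Fin.last] at this
    have hmid2 : w (Fin.succ (⟨1, by omega⟩ : Fin (k+3))) ∈
        (Set.univ \ {x, y} : Set V) := by
      apply hmem
      · intro h; have := congrArg Fin.val h; rw [Fin.val_succ, Fin.val_mk, Fin.val_zero] at this; omega
      · intro h
        have := congrArg Fin.val h
        rw [Fin.val_succ, Fin.val_mk, Fin.val_last] at this; omega
    obtain ⟨_, hc2⟩ := hcol ⟨0, by omega⟩ ⟨1, by omega⟩ rfl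
    obtain ⟨_, hc4⟩ := hcol ⟨1, by omega⟩ ⟨2, by omega⟩ rfl
    by_cases hca : Collider G (w (Fin.castSucc (⟨0, by omega⟩ : Fin (k+3))))
        (w (Fin.succ (⟨0, by omega⟩ : Fin (k+3))))
        (w (Fin.succ (⟨1, by omega⟩ : Fin (k+3))))
    · by_cases hcb : Collider G (w (Fin.castSucc (⟨1, by omega⟩ : Fin (k+3))))
          (w (Fin.succ (⟨1, by omega⟩ : Fin (k+3))))
          (w (Fin.succ (⟨2, by omega⟩ : Fin (k+3))))
      · -- hca.2 : G (w 2) (w 1), hcb.1 : G (w 1) (w 2)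
        have e12 : w (Fin.castSucc (⟨1, by omega⟩ : Fin (k+3)))
            = w (Fin.succ (⟨0, by omega⟩ : Fin (k+3))) := rfl
        have e21 : w (Fin.succ (⟨1, by omega⟩ : Fin (k+3)))
            = w (Fin.succ (⟨1, by omega⟩ : Fin (k+3))) := rfl
        have h12 : G (w (Fin.succ (⟨0, by omega⟩ : Fin (k+3))))
            (w (Fin.succ (⟨1, by omega⟩ : Fin (k+3)))) := hcb.1
        have h21 : G (w (Fin.succ (⟨1, by omega⟩ : Fin (k+3))))
            (w (Fin.succ (⟨0, by omega⟩ : Fin (k+3)))) := hca.2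
        exact hG _ ((Relation.TransGen.single h12).tail h21)
      · exact hc4 hcb hmid2
    · exact hc2 hca hmid1
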